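/- The operator ℒ_# = −2∂ₓ² + 2 − 3sech²(x/√2) is coercive without orthogonality conditions: there exists m₀ > 0 (one may take m₀ = 1/5) such that for all z ∈ H¹(ℝ), ∫ (2(z')² + (2 − 3sech²(x/√2)) z²) ≥ m₀ ‖z‖²_{H¹}. -/

import Mathlib

open MeasureTheory

noncomputable def V₀ : ℝ → ℝ := fun x => 2 - 3 * (1 / Real.cosh (x / Real.sqrt 2)) ^ 2

noncomputable def sch : ℝ → ℝ := fun x => (1 / Real.cosh (x / Real.sqrt 2)) ^ 2

noncomputable def th : ℝ → ℝ := fun x => Real.sinh (x / Real.sqrt 2) / Real.cosh (x / Real.sqrt 2)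

lemma sch_nonneg (x : ℝ) : 0 ≤ sch x := sq_nonneg _

lemma sch_le_one (x : ℝ) : sch x ≤ 1 := by
  have h := Real.one_le_cosh (x / Real.sqrt 2)
  have h0 : (0:ℝ) < Real.cosh (x / Real.sqrt 2) := Real.cosh_pos _
  have : 1 / Real.cosh (x / Real.sqrt 2) ≤ 1 := by
    rw [div_le_one h0]; exact h
  have h1 : 0 ≤ 1 / Real.cosh (x / Real.sqrt 2) := by positivity
  calc sch x = (1 / Real.cosh (x / Real.sqrt 2)) ^ 2 := rfl
    _ ≤ 1 ^ 2 := by exact pow_le_pow_left₀ h1 this 2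
    _ = 1 := one_pow 2

lemma th_sq (x : ℝ) : th x ^ 2 = 1 - sch x := by
  have h0 : Real.cosh (x / Real.sqrt 2) ≠ 0 := ne_of_gt (Real.cosh_pos _)
  have hcs := Real.cosh_sq_sub_sinh_sq (x / Real.sqrt 2)
  unfold th sch
  field_simp
  linarith

lemma th_hasDerivAt (x : ℝ) : HasDerivAt th ((Real.sqrt 2)⁻¹ * sch x) x := by
  have h0 : (0:ℝ) < Real.cosh (x / Real.sqrt 2) := Real.cosh_pos _
  have hu : HasDerivAt (fun y : ℝ => y / Real.sqrt 2) ((Real.sqrt 2)⁻¹) x := by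
    simpa [one_div] using (hasDerivAt_id x).div_const (Real.sqrt 2)
  have hsin : HasDerivAt (fun y => Real.sinh (y / Real.sqrt 2))
      (Real.cosh (x / Real.sqrt 2) * (Real.sqrt 2)⁻¹) x :=
    (Real.hasDerivAt_sinh _).comp x hu
  have hcos : HasDerivAt (fun y => Real.cosh (y / Real.sqrt 2))
      (Real.sinh (x / Real.sqrt 2) * (Real.sqrt 2)⁻¹) x :=
    (Real.hasDerivAt_cosh _).comp x hu
  have h := hsin.div hcos (ne_of_gt h0)
  refine h.congr_deriv ?_
  symm
  have hcs := Real.cosh_sq_sub_sinh_sq (x / Real.sqrt 2)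
  unfold sch
  field_simp
  linear_combination (-(1:ℝ)) * hcs

lemma continuous_th : Continuous th := by
  unfold th
  exact (Real.continuous_sinh.comp (continuous_id.div_const _)).div
    (Real.continuous_cosh.comp (continuous_id.div_const _))
    (fun x => ne_of_gt (Real.cosh_pos _))

lemma continuous_sch : Continuous sch := by
  unfold sch
  exact ((continuous_const.div (Real.continuous_cosh.comp (continuous_id.div_const _))
    (fun x => ne_of_gt (Real.cosh_pos _)))).pow 2

lemma q_ge : (7:ℝ)/10 ≤ (Real.sqrt 2)⁻¹ := by
  have hsq2 : Real.sqrt 2 ^ 2 = 2 := Real.sq_sqrt (by norm_num)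
  have hpos : (0:ℝ) < Real.sqrt 2 := Real.sqrt_pos.2 (by norm_num)
  have hle : Real.sqrt 2 ≤ 10/7 := by nlinarith
  have : (7:ℝ)/10 = (10/7:ℝ)⁻¹ := by norm_num
  rw [this]
  exact inv_anti₀ hpos hle

lemma q_le : (Real.sqrt 2)⁻¹ ≤ 1 := by
  have hsq2 : Real.sqrt 2 ^ 2 = 2 := Real.sq_sqrt (by norm_num)
  have hpos : (0:ℝ) < Real.sqrt 2 := Real.sqrt_pos.2 (by norm_num)
  have hge : (1:ℝ) ≤ Real.sqrt 2 := by nlinarith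
  simpa using inv_anti₀ (by norm_num) hge

theorem coercivity_without_orthogonality :
    ∃ m₀ : ℝ, 0 < m₀ ∧
      ∀ z : ℝ → ℝ, Differentiable ℝ z →
        MemLp z 2 (volume : Measure ℝ) → MemLp (deriv z) 2 (volume : Measure ℝ) →
        ∫ x : ℝ, (2 * (deriv z x) ^ 2 + V₀ x * (z x) ^ 2)
          ≥ m₀ * ((∫ x : ℝ, (z x) ^ 2) + ∫ x : ℝ, (deriv z x) ^ 2) := by
  refine ⟨1/10, by norm_num, ?_⟩
  intro z hzd hz hdz
  have hV : ∀ x, V₀ x = 2 - 3 * sch x := fun x => rfl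
  have hma : AEStronglyMeasurable z (volume : Measure ℝ) := hz.aestronglyMeasurable
  have hmb : AEStronglyMeasurable (deriv z) (volume : Measure ℝ) := hdz.aestronglyMeasurable
  have hz2 : Integrable (fun x => z x ^ 2) := hz.integrable_sq
  have hb2 : Integrable (fun x => deriv z x ^ 2) := hdz.integrable_sq
  have habs : ∀ x, |z x * deriv z x| ≤ z x ^ 2 + deriv z x ^ 2 := by
    intro x
    rcases abs_cases (z x * deriv z x) with ⟨h, _⟩ | ⟨h, _⟩ <;> rw [h] <;>
      nlinarith [sq_nonneg (z x - deriv z x), sq_nonneg (z x + deriv z x)]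
  have hzb : Integrable (fun x => z x * deriv z x) := by
    refine (hz2.add hb2).mono' (hma.mul hmb) (Filter.Eventually.of_forall fun x => ?_)
    rw [Real.norm_eq_abs]; exact habs x
  have ht2 : ∀ x, th x ^ 2 ≤ 1 := by
    intro x; have := th_sq x; have := sch_nonneg x; linarith
  have htabs : ∀ x, |th x| ≤ 1 := by
    intro x; rw [abs_le]; constructor <;> nlinarith [ht2 x, sq_abs (th x)]
  -- the functions
  set q : ℝ := (Real.sqrt 2)⁻¹ with hqdef
  have hq7 : (7:ℝ)/10 ≤ q := q_ge
  have hq1 : q ≤ 1 := q_le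
  set P : ℝ → ℝ := fun x => (13/10 * deriv z x + 13/10 * th x * z x) ^ 2 with hPdef
  set D : ℝ → ℝ := fun x =>
    13/10 * (q * sch x) * z x ^ 2 + 13/10 * th x * (2 * z x * deriv z x) with hDdef
  set F : ℝ → ℝ := fun x => 13/10 * th x * z x ^ 2 with hFdef
  have hF_deriv : ∀ x, HasDerivAt F (D x) x := by
    intro x
    have h1 : HasDerivAt (fun y => 13/10 * th y) (13/10 * (q * sch x)) x := by
      simpa [mul_assoc] using (th_hasDerivAt x).const_mul (13/10 : ℝ)
    have h2 : HasDerivAt (fun y => z y ^ 2) (2 * z x * deriv z x) x := by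
      have h := ((hzd x).hasDerivAt).pow 2
      exact (by simpa [mul_comm, mul_assoc] using h : HasDerivAt (z ^ 2) (2 * z x * deriv z x) x)
    have := h1.mul h2
    exact this
  have hmth : AEStronglyMeasurable th (volume : Measure ℝ) :=
    continuous_th.aestronglyMeasurable
  have hmsch : AEStronglyMeasurable sch (volume : Measure ℝ) :=
    continuous_sch.aestronglyMeasurable
  have hmz2 : AEStronglyMeasurable (fun x => z x ^ 2) (volume : Measure ℝ) := hz2.1
  have hF : Integrable F := by
    refine (hz2.const_mul 2).mono' ((aestronglyMeasurable_const.mul hmth).mul hmz2)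
      (Filter.Eventually.of_forall fun x => ?_)
    have h1 := htabs x
    have h2 := sq_nonneg (z x)
    rw [Real.norm_eq_abs, abs_mul, abs_mul]
    rw [abs_of_nonneg h2]
    have : |(13:ℝ)/10| * |th x| ≤ 2 := by
      rw [abs_of_nonneg (by norm_num : (0:ℝ) ≤ (13:ℝ)/10)]; nlinarith
    nlinarith [abs_nonneg (th x)]
  have hD : Integrable D := by
    have hbound : Integrable (fun x => 2 * z x ^ 2 + 3 * |z x * deriv z x|) :=
      (hz2.const_mul 2).add (hzb.abs.const_mul 3)
    refine hbound.mono' ?_ (Filter.Eventually.of_forall fun x => ?_)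
    · exact ((aestronglyMeasurable_const.mul (aestronglyMeasurable_const.mul hmsch)).mul
        hmz2).add ((aestronglyMeasurable_const.mul hmth).mul
        ((hma.const_mul 2).mul hmb))
    · have hs0 := sch_nonneg x
      have hs1 := sch_le_one x
      have h1 := htabs x
      have h2 := sq_nonneg (z x)
      have h3 := abs_nonneg (z x * deriv z x)
      rw [Real.norm_eq_abs]
      have e1 : |13/10 * (q * sch x) * z x ^ 2| ≤ 2 * z x ^ 2 := by
        rw [abs_mul, abs_of_nonneg h2, abs_mul,
          abs_of_nonneg (by norm_num : (0:ℝ) ≤ (13:ℝ)/10),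
          abs_of_nonneg (mul_nonneg (by linarith) hs0)]
        have hqs : q * sch x ≤ 1 := mul_le_one₀ hq1 hs0 hs1
        nlinarith [mul_le_mul_of_nonneg_right hqs h2]
      have e2 : |13/10 * th x * (2 * z x * deriv z x)| ≤ 3 * |z x * deriv z x| := by
        have : (2:ℝ) * z x * deriv z x = 2 * (z x * deriv z x) := by ring
        rw [this, abs_mul, abs_mul, abs_mul,
          abs_of_nonneg (by norm_num : (0:ℝ) ≤ (13:ℝ)/10),
          abs_of_nonneg (by norm_num : (0:ℝ) ≤ (2:ℝ))]
        nlinarith [abs_nonneg (th x)]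
      calc |13/10 * (q * sch x) * z x ^ 2 + 13/10 * th x * (2 * z x * deriv z x)|
          ≤ |13/10 * (q * sch x) * z x ^ 2| + |13/10 * th x * (2 * z x * deriv z x)| :=
            abs_add_le _ _
        _ ≤ 2 * z x ^ 2 + 3 * |z x * deriv z x| := add_le_add e1 e2
  have hP : Integrable P := by
    have hbound : Integrable (fun x => 4 * z x ^ 2 + 4 * deriv z x ^ 2) :=
      (hz2.const_mul 4).add (hb2.const_mul 4)
    refine hbound.mono' ?_ (Filter.Eventually.of_forall fun x => ?_)
    · exact ((hmb.const_mul _).add ((aestronglyMeasurable_const.mul hmth).mul hma)).pow 2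
    · simp only [hPdef]
      rw [Real.norm_eq_abs, abs_of_nonneg (sq_nonneg _)]
      nlinarith [ht2 x, sq_nonneg (th x * z x - deriv z x), sq_nonneg (th x * z x + deriv z x),
        sq_nonneg (z x), sq_nonneg (deriv z x), sq_nonneg (th x * z x),
        mul_nonneg (sub_nonneg.2 (ht2 x)) (sq_nonneg (z x))]
  have hG : Integrable (fun x => 2 * (deriv z x) ^ 2 + V₀ x * (z x) ^ 2) := by
    refine (hb2.const_mul 2).add ?_
    refine (hz2.const_mul 2).mono'
      ((Continuous.aestronglyMeasurable (continuous_const.sub (continuous_const.mul continuous_sch) : Continuous V₀)).mul hmz2)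
      (Filter.Eventually.of_forall fun x => ?_)
    rw [Real.norm_eq_abs, abs_mul, abs_of_nonneg (sq_nonneg (z x))]
    have hs0 := sch_nonneg x
    have hs1 := sch_le_one x
    have : |V₀ x| ≤ 2 := by rw [hV, abs_le]; constructor <;> nlinarith
    nlinarith [sq_nonneg (z x), abs_nonneg (V₀ x)]
  -- zero integral of D
  have hD0 : ∫ x : ℝ, D x = 0 :=
    integral_eq_zero_of_hasDerivAt_of_integrable hF_deriv hD hF
  -- pointwise inequality
  have hpoint : ∀ x, P x - 13/10 * D x
      ≤ 2 * (deriv z x) ^ 2 + V₀ x * (z x) ^ 2 - 1/10 * (z x ^ 2 + deriv z x ^ 2) := by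
    intro x
    rw [hV]
    have ht := th_sq x
    have hs0 := sch_nonneg x
    have hs1 := sch_le_one x
    have h1 : 0 ≤ sch x * z x ^ 2 := mul_nonneg hs0 (sq_nonneg _)
    have h2 : 0 ≤ (1 - sch x) * z x ^ 2 := mul_nonneg (by linarith) (sq_nonneg _)
    have h3 : 0 ≤ (q - 7/10) * (sch x * z x ^ 2) := mul_nonneg (by linarith) h1
    simp only [hPdef, hDdef]
    nlinarith [sq_nonneg (deriv z x), sq_nonneg (z x)]
  -- integrate
  have hPD : Integrable (fun x => P x - 13/10 * D x) := hP.sub (hD.const_mul _)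
  have hhalf : Integrable (fun x => 1/10 * (z x ^ 2 + deriv z x ^ 2)) :=
    (hz2.add hb2).const_mul (1/10)
  have hL : Integrable (fun x =>
      2 * (deriv z x) ^ 2 + V₀ x * (z x) ^ 2 - 1/10 * (z x ^ 2 + deriv z x ^ 2)) :=
    hG.sub hhalf
  have step1 : ∫ x : ℝ, (P x - 13/10 * D x)
      ≤ ∫ x : ℝ, (2 * (deriv z x) ^ 2 + V₀ x * (z x) ^ 2 - 1/10 * (z x ^ 2 + deriv z x ^ 2)) :=
    integral_mono hPD hL hpoint
  have step2 : (0:ℝ) ≤ ∫ x : ℝ, (P x - 13/10 * D x) := by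
    rw [integral_sub hP (hD.const_mul _), integral_const_mul, hD0, mul_zero, sub_zero]
    exact integral_nonneg fun x => sq_nonneg _
  have step3 : ∫ x : ℝ, (2 * (deriv z x) ^ 2 + V₀ x * (z x) ^ 2 - 1/10 * (z x ^ 2 + deriv z x ^ 2))
      = (∫ x : ℝ, (2 * (deriv z x) ^ 2 + V₀ x * (z x) ^ 2))
        - 1/10 * ((∫ x : ℝ, z x ^ 2) + ∫ x : ℝ, deriv z x ^ 2) := by
    rw [integral_sub hG hhalf, integral_const_mul, integral_add hz2 hb2]
  rw [ge_iff_le]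
  rw [step3] at step1
  linarith
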